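/- Let q_1, ..., q_k be squarefree integers each greater than 1, d = lcm(q_1,...,q_k), G : (0,1) → ℂ, and G_0 a nondecreasing function on positive integers such that ∑_{a=1}^{q-1} |G(a/q)|² ≤ q·G_0(q) for all squarefree q > 1. Then |∑ ∏_{i=1}^k G(a_i/q_i)| ≤ (1/d) ∏_{i=1}^k q_i·G_0(q_i)^{1/2}, where the sum is over tuples (a_1,...,a_k) with 0 < a_i < q_i and ∑ a_i/q_i ∈ ℤ. -/

import Mathlib

open Finset


lemma finset_lcm_ne_zero' {ι : Type} [DecidableEq ι] (s : Finset ι) (q : ι → ℕ) (h : ∀ i ∈ s, q i ≠ 0) : s.lcm q ≠ 0 := by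
  induction s using Finset.induction with
  | empty => simp [Finset.lcm_empty]
  | insert a s' hx ih =>
    rw [Finset.lcm_insert]
    exact Nat.lcm_ne_zero (h a (mem_insert_self _ _)) (ih (fun i hi => h i (mem_insert_of_mem hi)))

section rat
variable {ι : Type} [Fintype ι] [DecidableEq ι]

lemma den_one_iff_dvd (q : ι → ℕ) (hq : ∀ i, q i ≠ 0) (a : ι → ℕ) :
    (∑ i, (a i : ℚ) / (q i : ℚ)).den = 1 ↔
      ((Finset.univ.lcm q : ℕ) : ℤ) ∣ ∑ i, (a i : ℤ) * ((Finset.univ.lcm q / q i : ℕ) : ℤ) := by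
  set d : ℕ := Finset.univ.lcm q with hd
  have hdne : d ≠ 0 := finset_lcm_ne_zero' _ _ (fun i _ => hq i)
  set r : ℚ := ∑ i, (a i : ℚ) / (q i : ℚ) with hr
  have hqq : ∀ i, (q i : ℚ) ≠ 0 := fun i => by exact_mod_cast hq i
  have hcast : ∀ i, ((d / q i : ℕ) : ℚ) = (d : ℚ) / (q i : ℚ) := fun i =>
    Nat.cast_div (hd ▸ Finset.dvd_lcm (mem_univ i)) (hqq i)
  have key : ((∑ i, (a i : ℤ) * ((d / q i : ℕ) : ℤ) : ℤ) : ℚ) = (d : ℚ) * r := by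
    rw [Int.cast_sum, hr, Finset.mul_sum]
    refine Finset.sum_congr rfl fun i _ => ?_
    rw [Int.cast_mul, Int.cast_natCast, Int.cast_natCast, hcast i]
    field_simp
  constructor
  · intro h
    have hnum : ((r.num : ℚ)) = r := (Rat.den_eq_one_iff r).1 h
    have h1 : ((∑ i, (a i : ℤ) * ((d / q i : ℕ) : ℤ) : ℤ) : ℚ) = (((d : ℤ) * r.num : ℤ) : ℚ) := by
      rw [key, Int.cast_mul, Int.cast_natCast, hnum]
    have h2 : (∑ i, (a i : ℤ) * ((d / q i : ℕ) : ℤ)) = (d : ℤ) * r.num :=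
      Int.cast_injective h1
    exact Dvd.intro _ h2.symm
  · rintro ⟨m, hm⟩
    have h1 : (d : ℚ) * r = (d : ℚ) * (m : ℚ) := by
      rw [← key, hm, Int.cast_mul, Int.cast_natCast]
    have hr2 : r = (m : ℚ) := mul_left_cancel₀ (by exact_mod_cast hdne) h1
    rw [hr2]; exact Rat.den_intCast m

lemma den_one_forces_dvd (q : ι → ℕ) (hq : ∀ i, q i ≠ 0) (a : ι → ℕ) (i₀ : ι)
    (h : (∑ i, (a i : ℚ) / (q i : ℚ)).den = 1) :
    q i₀ ∣ a i₀ * (Finset.univ.erase i₀).lcm q := by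
  set L : ℕ := (Finset.univ.erase i₀).lcm q with hL
  set r : ℚ := ∑ i, (a i : ℚ) / (q i : ℚ) with hr
  have hqq : ∀ i, (q i : ℚ) ≠ 0 := fun i => by exact_mod_cast hq i
  have hnum : ((r.num : ℚ)) = r := (Rat.den_eq_one_iff r).1 h
  set z : ℤ := (L : ℤ) * r.num - ∑ j ∈ Finset.univ.erase i₀, (a j : ℤ) * ((L / q j : ℕ) : ℤ) with hz
  have expand : (L : ℚ) * r = ((a i₀ : ℚ) * (L : ℚ)) / (q i₀ : ℚ)
      + ∑ j ∈ Finset.univ.erase i₀, ((a j : ℚ) * ((L / q j : ℕ) : ℚ)) := by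
    rw [hr, Finset.mul_sum,
      ← Finset.add_sum_erase (Finset.univ) (fun i => (L : ℚ) * ((a i : ℚ) / (q i : ℚ))) (mem_univ i₀)]
    congr 1
    · field_simp
    · refine Finset.sum_congr rfl fun j hj => ?_
      rw [Nat.cast_div (hL ▸ Finset.dvd_lcm hj) (hqq j)]
      field_simp
  have key : ((a i₀ : ℚ) * (L : ℚ)) / (q i₀ : ℚ) = (z : ℚ) := by
    rw [hz, Int.cast_sub, Int.cast_mul, Int.cast_natCast, Int.cast_sum, hnum]
    have : ((∑ j ∈ Finset.univ.erase i₀, (a j : ℤ) * ((L / q j : ℕ) : ℤ) : ℤ) : ℚ)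
        = ∑ j ∈ Finset.univ.erase i₀, ((a j : ℚ) * ((L / q j : ℕ) : ℚ)) := by
      rw [Int.cast_sum]
      exact Finset.sum_congr rfl fun j _ => by rw [Int.cast_mul, Int.cast_natCast, Int.cast_natCast]
    rw [Int.cast_sum] at this
    rw [this, expand]
    ring
  have key2 : ((a i₀ : ℚ) * (L : ℚ)) = (z : ℚ) * (q i₀ : ℚ) := by
    rw [← key, div_mul_cancel₀]
    exact hqq i₀
  have key3 : ((a i₀ * L : ℕ) : ℤ) = z * (q i₀ : ℤ) := by exact_mod_cast key2
  have : (q i₀ : ℤ) ∣ ((a i₀ * L : ℕ) : ℤ) := Dvd.intro_left z key3.symm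
  exact_mod_cast this

end rat

section helpers
variable {ι : Type} [DecidableEq ι]

lemma squarefree_finset_lcm (s : Finset ι) (q : ι → ℕ) (h : ∀ i ∈ s, Squarefree (q i)) :
    Squarefree (s.lcm q) := by
  induction s using Finset.induction with
  | empty => simp [Finset.lcm_empty]
  | insert a s' hx ih =>
    rw [Finset.lcm_insert]
    have h1 : Squarefree (q a) := h a (mem_insert_self _ _)
    have h2 : Squarefree (s'.lcm q) := ih (fun i hi => h i (mem_insert_of_mem hi))
    have h1' : q a ≠ 0 := h1.ne_zero
    have h2' : s'.lcm q ≠ 0 := h2.ne_zero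
    have hln : Nat.lcm (q a) (s'.lcm q) ≠ 0 := Nat.lcm_ne_zero h1' h2'
    show Squarefree (Nat.lcm (q a) (s'.lcm q))
    rw [Nat.squarefree_iff_factorization_le_one hln]
    intro p
    rw [Nat.factorization_lcm h1' h2']
    simp only [Finsupp.sup_apply, sup_le_iff]
    exact ⟨(Nat.squarefree_iff_factorization_le_one h1').1 h1 p,
      (Nat.squarefree_iff_factorization_le_one h2').1 h2 p⟩

lemma prime_dvd_finset_lcm {p : ℕ} (hp : p.Prime) (s : Finset ι) (q : ι → ℕ)
    (h : p ∣ s.lcm q) : ∃ i ∈ s, p ∣ q i := by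
  induction s using Finset.induction with
  | empty =>
    simp only [Finset.lcm_empty] at h
    exact absurd (Nat.eq_one_of_dvd_one (by simpa using h)) hp.ne_one
  | insert a s' hx ih =>
    rw [Finset.lcm_insert] at h
    have : p ∣ (q a) * (s'.lcm q) := h.trans (Nat.lcm_dvd_mul _ _)
    rcases (Nat.Prime.dvd_mul hp).1 this with h1 | h2
    · exact ⟨a, mem_insert_self _ _, h1⟩
    · obtain ⟨i, hi, hd⟩ := ih h2
      exact ⟨i, mem_insert_of_mem hi, hd⟩

end helpers


section W
variable {ι : Type} [Fintype ι] [DecidableEq ι]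

lemma mod_unique_sol' {p s u : ℕ} (hu : u < p) (h : p ∣ s + u) : u = (p - s % p) % p := by
  have hp : 0 < p := lt_of_le_of_lt (Nat.zero_le _) hu
  have h1 : s % p < p := Nat.mod_lt _ hp
  have h2 : p ∣ (s % p + u) := (Nat.modEq_zero_iff_dvd).1
    (((Nat.mod_modEq s p).add_right u).trans ((Nat.modEq_zero_iff_dvd).2 h))
  have h3 : s % p + u < 2 * p := by omega
  rcases h2 with ⟨c, hc⟩
  have hc2 : c = 0 ∨ c = 1 := by
    rcases Nat.lt_or_ge c 2 with h' | h'
    · omega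
    · exfalso; nlinarith
  rcases hc2 with rfl | rfl
  · have h4 : s % p = 0 ∧ u = 0 := by omega
    rw [h4.2, h4.1, Nat.sub_zero, Nat.mod_self]
  · have hu' : u = p - s % p := by omega
    have h4 : p - s % p < p := by omega
    rw [hu']
    exact (Nat.mod_eq_of_lt h4).symm

lemma sol_dvd {p : ℕ} (hp : 0 < p) (s : ℕ) : p ∣ s + (p - s % p) % p := by
  have h1 : s % p < p := Nat.mod_lt _ hp
  have h2 : s = p * (s / p) + s % p := (Nat.div_add_mod s p).symm
  rcases Nat.eq_zero_or_pos (s % p) with h0 | h0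
  · rw [h0, Nat.sub_zero, Nat.mod_self, Nat.add_zero]
    exact ⟨s / p, by omega⟩
  · rw [Nat.mod_eq_of_lt (by omega : p - s % p < p)]
    refine ⟨s / p + 1, ?_⟩
    have h5 : p * (s / p + 1) = p * (s / p) + p := by ring
    omega

lemma kill_coord (p : ℕ) (hp : 0 < p) (g : ι → ℕ) (k : ι) (hgk : g k = p)
    (z : ι → ℕ → ℝ) (hzk : ∀ t, z k t = 1) :
    ∑ b ∈ (Fintype.piFinset fun i => Finset.range (g i)).filter (fun b => p ∣ ∑ i, b i),
      ∏ i, z i (b i)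
    = ∏ i, ∑ t ∈ Finset.range (if i = k then 1 else g i), z i t := by
  rw [Finset.prod_univ_sum]
  refine (Finset.sum_nbij' (i := fun b => Function.update b k 0)
    (j := fun b' => Function.update b' k ((p - (∑ i ∈ univ.erase k, b' i) % p) % p))
    ?_ ?_ ?_ ?_ ?_).symm.symm
  · intro b hb
    simp only [Finset.mem_filter, Fintype.mem_piFinset] at hb
    rw [Fintype.mem_piFinset]
    intro i
    rcases eq_or_ne i k with rfl | hik
    · simp [Function.update_self]
    · rw [Function.update_of_ne hik]
      simpa [hik] using hb.1 i
  · intro b' hb'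
    rw [Fintype.mem_piFinset] at hb'
    rw [Finset.mem_filter, Fintype.mem_piFinset]
    constructor
    · intro i
      rcases eq_or_ne i k with rfl | hik
      · rw [Function.update_self, Finset.mem_range, hgk]
        exact Nat.mod_lt _ hp
      · rw [Function.update_of_ne hik]
        simpa [hik] using hb' i
    · have hsum : ∑ i, Function.update b' k ((p - (∑ i ∈ univ.erase k, b' i) % p) % p) i
          = ((p - (∑ i ∈ univ.erase k, b' i) % p) % p) + ∑ i ∈ univ.erase k, b' i := by
        rw [← Finset.add_sum_erase univ _ (mem_univ k)]
        congr 1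
        · exact Function.update_self _ _ _
        · exact Finset.sum_congr rfl fun i hi => Function.update_of_ne (Finset.ne_of_mem_erase hi) _ _
      rw [hsum, add_comm]
      exact sol_dvd hp _
  · intro b hb
    simp only [Finset.mem_filter, Fintype.mem_piFinset] at hb
    rw [Function.update_idem]
    have hs : ∑ i ∈ univ.erase k, (Function.update b k 0) i = ∑ i ∈ univ.erase k, b i :=
      Finset.sum_congr rfl fun i hi => Function.update_of_ne (Finset.ne_of_mem_erase hi) _ _
    rw [hs]
    have hbk : b k < p := by
      have := hb.1 k
      rw [Finset.mem_range, hgk] at this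
      exact this
    have hdvd : p ∣ (∑ i ∈ univ.erase k, b i) + b k := by
      have h2 := hb.2
      rw [← Finset.add_sum_erase univ b (mem_univ k), add_comm] at h2
      exact h2
    rw [← mod_unique_sol' hbk hdvd]
    exact Function.update_eq_self k b
  · intro b' hb'
    rw [Function.update_idem]
    have h0 : b' k = 0 := by
      have := (Fintype.mem_piFinset.1 hb') k
      simpa using this
    rw [← h0]
    exact Function.update_eq_self k b'
  · intro b hb
    refine Finset.prod_congr rfl fun i _ => ?_
    rcases eq_or_ne i k with rfl | hik
    · rw [Function.update_self, hzk, hzk]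
    · rw [Function.update_of_ne hik]

end W


section coord

-- e b c = (b * q' + c * g) % q
lemma coord_inj {g q' q : ℕ} (hgq : g * q' = q) (hcop : Nat.Coprime g q')
    {b c b' c' : ℕ} (hb : b < g) (hc : c < q') (hb' : b' < g) (hc' : c' < q')
    (h : (b * q' + c * g) % q = (b' * q' + c' * g) % q) : b = b' ∧ c = c' := by
  have hgdvd : g ∣ q := ⟨q', hgq.symm⟩
  have hq'dvd : q' ∣ q := ⟨g, by rw [← hgq]; ring⟩
  have hmod : (b * q' + c * g) ≡ (b' * q' + c' * g) [MOD q] := h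
  constructor
  · have h1 : (b * q' + c * g) ≡ (b' * q' + c' * g) [MOD g] := hmod.of_dvd hgdvd
    have h2 : b * q' ≡ b' * q' [MOD g] := by
      have hcg : c * g ≡ 0 [MOD g] := (Nat.modEq_zero_iff_dvd).2 ⟨c, mul_comm c g⟩
      have hcg' : c' * g ≡ 0 [MOD g] := (Nat.modEq_zero_iff_dvd).2 ⟨c', mul_comm c' g⟩
      calc b * q' ≡ b * q' + 0 [MOD g] := by rw [add_zero]
        _ ≡ b * q' + c * g [MOD g] := (Nat.ModEq.refl _).add hcg.symm
        _ ≡ b' * q' + c' * g [MOD g] := h1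
        _ ≡ b' * q' + 0 [MOD g] := (Nat.ModEq.refl _).add hcg'
        _ ≡ b' * q' [MOD g] := by rw [add_zero]
    exact (h2.cancel_right_of_coprime hcop).eq_of_lt_of_lt hb hb'
  · have h1 : (b * q' + c * g) ≡ (b' * q' + c' * g) [MOD q'] := hmod.of_dvd hq'dvd
    have h2 : c * g ≡ c' * g [MOD q'] := by
      have hcg : b * q' ≡ 0 [MOD q'] := (Nat.modEq_zero_iff_dvd).2 ⟨b, mul_comm b q'⟩
      have hcg' : b' * q' ≡ 0 [MOD q'] := (Nat.modEq_zero_iff_dvd).2 ⟨b', mul_comm b' q'⟩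
      calc c * g ≡ 0 + c * g [MOD q'] := by rw [zero_add]
        _ ≡ b * q' + c * g [MOD q'] := hcg.symm.add (Nat.ModEq.refl _)
        _ ≡ b' * q' + c' * g [MOD q'] := h1
        _ ≡ 0 + c' * g [MOD q'] := hcg'.add (Nat.ModEq.refl _)
        _ ≡ c' * g [MOD q'] := by rw [zero_add]
    exact (h2.cancel_right_of_coprime (Nat.coprime_comm.mp hcop)).eq_of_lt_of_lt hc hc'

lemma coord_mem {g q' q : ℕ} (hq : 0 < q) (b c : ℕ) : (b * q' + c * g) % q < q :=
  Nat.mod_lt _ hq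

lemma coord_surj {g q' q : ℕ} (hq : 0 < q) (hgq : g * q' = q) (hcop : Nat.Coprime g q')
    {a : ℕ} (ha : a < q) : ∃ b, b < g ∧ ∃ c, c < q' ∧ (b * q' + c * g) % q = a := by
  classical
  set f : ℕ × ℕ → ℕ := fun bc => (bc.1 * q' + bc.2 * g) % q with hf
  have hinj : Set.InjOn f ↑(Finset.range g ×ˢ Finset.range q') := by
    rintro ⟨b, c⟩ hbc ⟨b', c'⟩ hbc' heq
    simp only [Finset.coe_product, Set.mem_prod, Finset.mem_coe, Finset.mem_range] at hbc hbc'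
    obtain ⟨h1, h2⟩ := coord_inj hgq hcop hbc.1 hbc.2 hbc'.1 hbc'.2 heq
    exact Prod.ext h1 h2
  have hsub : (Finset.range g ×ˢ Finset.range q').image f ⊆ Finset.range q := by
    intro x hx
    obtain ⟨bc, _, rfl⟩ := Finset.mem_image.1 hx
    exact Finset.mem_range.2 (coord_mem hq _ _)
  have hcard : (Finset.range q).card ≤ ((Finset.range g ×ˢ Finset.range q').image f).card := by
    rw [Finset.card_image_of_injOn hinj, Finset.card_product, Finset.card_range,
      Finset.card_range, Finset.card_range, hgq]
  have heq := Finset.eq_of_subset_of_card_le hsub hcard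
  have : a ∈ (Finset.range g ×ˢ Finset.range q').image f := by
    rw [heq]; exact Finset.mem_range.2 ha
  obtain ⟨⟨b, c⟩, hbc, hfa⟩ := Finset.mem_image.1 this
  simp only [Finset.mem_product, Finset.mem_range] at hbc
  exact ⟨b, hbc.1, c, hbc.2, hfa⟩

lemma coord_sum {g q' q : ℕ} {M : Type*} [AddCommMonoid M] (hq : 0 < q) (hgq : g * q' = q)
    (hcop : Nat.Coprime g q') (f : ℕ → M) :
    ∑ b ∈ Finset.range g, ∑ c ∈ Finset.range q', f ((b * q' + c * g) % q)
      = ∑ a ∈ Finset.range q, f a := by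
  classical
  rw [← Finset.sum_product']
  refine Finset.sum_bij (fun bc _ => (bc.1 * q' + bc.2 * g) % q) ?_ ?_ ?_ ?_
  · intro bc _
    exact Finset.mem_range.2 (coord_mem hq _ _)
  · rintro ⟨b, c⟩ hbc ⟨b', c'⟩ hbc' heq
    simp only [Finset.mem_product, Finset.mem_range] at hbc hbc'
    obtain ⟨h1, h2⟩ := coord_inj hgq hcop hbc.1 hbc.2 hbc'.1 hbc'.2 heq
    exact Prod.ext h1 h2
  · intro a ha
    obtain ⟨b, hb, c, hc, he⟩ := coord_surj hq hgq hcop (Finset.mem_range.1 ha)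
    exact ⟨(b, c), Finset.mem_product.2 ⟨Finset.mem_range.2 hb, Finset.mem_range.2 hc⟩, he⟩
  · intro bc _
    rfl

end coord


section arith

variable {p q d : ℕ}

lemma arith_pd' (hp : p.Prime) (hsfd : Squarefree d) (hpd : p ∣ d) : ¬ p ∣ (d / p) := by
  intro h
  obtain ⟨k, hk⟩ := h
  have hd : d = p * (d / p) := (Nat.mul_div_cancel' hpd).symm
  exact (Nat.squarefree_iff_prime_squarefree.1 hsfd p hp) ⟨k, by rw [hd, hk]; ring⟩

lemma arith_cop_q' (hp : p.Prime) (hsfd : Squarefree d) (hqd : q ∣ d) (hpd : p ∣ d) :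
    Nat.Coprime p (q / Nat.gcd p q) := by
  rcases Classical.em (p ∣ q) with hc | hc
  · have hg : Nat.gcd p q = p := Nat.gcd_eq_left hc
    rw [hg]
    refine (hp.coprime_iff_not_dvd).2 ?_
    intro h
    have h1 : p * (q / p) = q := Nat.mul_div_cancel' hc
    have h2 : p * p ∣ q := by
      obtain ⟨k, hk⟩ := h
      exact ⟨k, by rw [← h1, hk]; ring⟩
    exact (Nat.squarefree_iff_prime_squarefree.1 hsfd p hp) (h2.trans hqd)
  · have hg : Nat.gcd p q = 1 := (hp.coprime_iff_not_dvd).2 hc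
    rw [hg, Nat.div_one]
    exact (hp.coprime_iff_not_dvd).2 hc

lemma arith_cop_g (hp : p.Prime) (hsfd : Squarefree d) (hqd : q ∣ d) (hpd : p ∣ d) :
    Nat.Coprime (Nat.gcd p q) (q / Nat.gcd p q) := by
  rcases (Nat.dvd_prime hp).1 (Nat.gcd_dvd_left p q) with h1 | h1
  · rw [h1]; exact Nat.coprime_one_left _
  · rw [h1]
    have h2 := arith_cop_q' hp hsfd hqd hpd
    rwa [h1] at h2

lemma arith_q'_dvd (hp : p.Prime) (hsfd : Squarefree d) (hqd : q ∣ d) (hpd : p ∣ d) :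
    (q / Nat.gcd p q) ∣ d / p := by
  have h1 : (q / Nat.gcd p q) ∣ q := Nat.div_dvd_of_dvd (Nat.gcd_dvd_right p q)
  have h2 : (q / Nat.gcd p q) ∣ p * (d / p) := by
    rw [Nat.mul_div_cancel' hpd]
    exact h1.trans hqd
  exact (Nat.Coprime.dvd_of_dvd_mul_left
    (Nat.coprime_comm.mp (arith_cop_q' hp hsfd hqd hpd)) h2)

lemma arith_A (hp : p.Prime) (hq0 : q ≠ 0) (hpq : p ∣ q) (hqd : q ∣ d) :
    (q / Nat.gcd p q) * (d / q) = d / p := by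
  have hg : Nat.gcd p q = p := Nat.gcd_eq_left hpq
  have hp0 : p ≠ 0 := hp.ne_zero
  have hpd : p ∣ d := hpq.trans hqd
  apply Nat.eq_of_mul_eq_mul_right (Nat.pos_of_ne_zero hp0)
  rw [hg]
  calc q / p * (d / q) * p = (q / p * p) * (d / q) := by ring
    _ = q * (d / q) := by rw [Nat.div_mul_cancel hpq]
    _ = d := Nat.mul_div_cancel' hqd
    _ = d / p * p := (Nat.div_mul_cancel hpd).symm

lemma arith_B (hp : p.Prime) (hsfd : Squarefree d) (hq0 : q ≠ 0) (hqd : q ∣ d) (hpd : p ∣ d) :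
    Nat.gcd p q * (d / q) = p * ((d / p) / (q / Nat.gcd p q)) := by
  have hq' : q / Nat.gcd p q ≠ 0 := by
    intro h
    have := Nat.mul_div_cancel' (Nat.gcd_dvd_right p q)
    rw [h, Nat.mul_zero] at this
    exact hq0 this.symm
  apply Nat.eq_of_mul_eq_mul_right (Nat.pos_of_ne_zero hq')
  calc Nat.gcd p q * (d / q) * (q / Nat.gcd p q)
      = (Nat.gcd p q * (q / Nat.gcd p q)) * (d / q) := by ring
    _ = q * (d / q) := by rw [Nat.mul_div_cancel' (Nat.gcd_dvd_right p q)]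
    _ = d := Nat.mul_div_cancel' hqd
    _ = p * (d / p) := (Nat.mul_div_cancel' hpd).symm
    _ = p * (((d / p) / (q / Nat.gcd p q)) * (q / Nat.gcd p q)) := by
        rw [Nat.div_mul_cancel (arith_q'_dvd hp hsfd hqd hpd)]
    _ = p * ((d / p) / (q / Nat.gcd p q)) * (q / Nat.gcd p q) := by ring

end arith

section cond

variable {ι : Type} [Fintype ι] [DecidableEq ι]

lemma cond_split (q : ι → ℕ) (d p : ℕ)
    (hsfd : Squarefree d) (hp : p.Prime) (hpd : p ∣ d) (hqd : ∀ i, q i ∣ d)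
    (hq0 : ∀ i, q i ≠ 0)
    (b c : ι → ℕ) (hb : ∀ i, b i < Nat.gcd p (q i)) :
    (d ∣ ∑ i, ((b i * (q i / Nat.gcd p (q i)) + c i * Nat.gcd p (q i)) % q i) * (d / q i))
    ↔ (p ∣ ∑ i, b i) ∧
      ((d / p) ∣ ∑ i, c i * ((d / p) / (q i / Nat.gcd p (q i)))) := by
  classical
  set g : ι → ℕ := fun i => Nat.gcd p (q i) with hgdef
  set q' : ι → ℕ := fun i => q i / g i with hq'def
  set d' : ℕ := d / p with hd'def
  set w : ι → ℕ := fun i => d / q i with hwdef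
  set w' : ι → ℕ := fun i => d' / q' i with hw'def
  set Y : ℤ := ∑ i, (b i : ℤ) with hYdef
  set Z : ℤ := ∑ i, (c i : ℤ) * (w' i : ℤ) with hZdef
  set K : ℤ := ∑ i, ((b i * q' i + c i * g i) / q i : ℕ) with hKdef
  have hp0 : (0:ℕ) < p := hp.pos
  have hpd' : ¬ p ∣ d' := arith_pd' hp hsfd hpd
  have hterm : ∀ i, (((b i * q' i + c i * g i) % q i : ℕ) : ℤ) * (w i : ℤ)
      = (d' : ℤ) * (b i : ℤ) + (p : ℤ) * ((c i : ℤ) * (w' i : ℤ))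
        - (d : ℤ) * (((b i * q' i + c i * g i) / q i : ℕ) : ℤ) := by
    intro i
    have hE : (((b i * q' i + c i * g i) % q i : ℕ) : ℤ)
        = (b i : ℤ) * (q' i : ℤ) + (c i : ℤ) * (g i : ℤ)
          - (q i : ℤ) * (((b i * q' i + c i * g i) / q i : ℕ) : ℤ) := by
      have h1 : (b i * q' i + c i * g i) % q i + q i * ((b i * q' i + c i * g i) / q i)
          = b i * q' i + c i * g i := Nat.mod_add_div _ _
      have h2 : (((b i * q' i + c i * g i) % q i : ℕ) : ℤ)
          + (q i : ℤ) * (((b i * q' i + c i * g i) / q i : ℕ) : ℤ)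
          = (b i : ℤ) * (q' i : ℤ) + (c i : ℤ) * (g i : ℤ) := by exact_mod_cast h1
      linarith
    have hbt : (b i : ℤ) * ((q' i : ℤ) * (w i : ℤ)) = (d' : ℤ) * (b i : ℤ) := by
      rcases Classical.em (p ∣ q i) with hc | hc
      · have := arith_A hp (hq0 i) hc (hqd i)
        have hA : (q' i : ℤ) * (w i : ℤ) = (d' : ℤ) := by exact_mod_cast this
        rw [hA]; ring
      · have h5 : b i < Nat.gcd p (q i) := hb i
        have h6 : Nat.gcd p (q i) = 1 := (hp.coprime_iff_not_dvd).2 hc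
        have hb0 : b i = 0 := by omega
        rw [hb0]; simp
    have hct : (g i : ℤ) * (w i : ℤ) = (p : ℤ) * (w' i : ℤ) := by
      exact_mod_cast arith_B hp hsfd (hq0 i) (hqd i) hpd
    have hqw : (q i : ℤ) * (w i : ℤ) = (d : ℤ) := by
      exact_mod_cast Nat.mul_div_cancel' (hqd i)
    calc (((b i * q' i + c i * g i) % q i : ℕ) : ℤ) * (w i : ℤ)
        = (b i : ℤ) * ((q' i : ℤ) * (w i : ℤ)) + (c i : ℤ) * ((g i : ℤ) * (w i : ℤ))
          - ((q i : ℤ) * (w i : ℤ)) * (((b i * q' i + c i * g i) / q i : ℕ) : ℤ) := by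
          rw [hE]; ring
      _ = (d' : ℤ) * (b i : ℤ) + (p : ℤ) * ((c i : ℤ) * (w' i : ℤ))
          - (d : ℤ) * (((b i * q' i + c i * g i) / q i : ℕ) : ℤ) := by
          rw [hbt, hct, hqw]; ring
  have hXsum : ((∑ i, ((b i * q' i + c i * g i) % q i) * (w i) : ℕ) : ℤ)
      = (d' : ℤ) * Y + (p : ℤ) * Z - (d : ℤ) * K := by
    push_cast
    rw [hYdef, hZdef, hKdef, Finset.mul_sum, Finset.mul_sum, Finset.mul_sum,
      ← Finset.sum_add_distrib, ← Finset.sum_sub_distrib]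
    refine Finset.sum_congr rfl fun i _ => ?_
    have := hterm i
    push_cast at this ⊢
    linarith
  have hdZ : (d : ℤ) = (p : ℤ) * (d' : ℤ) := by exact_mod_cast (Nat.mul_div_cancel' hpd).symm
  have hcopZ : IsCoprime (p : ℤ) (d' : ℤ) :=
    ((hp.coprime_iff_not_dvd).2 hpd').isCoprime
  constructor
  · intro h
    have hZd : (d : ℤ) ∣ ((∑ i, ((b i * q' i + c i * g i) % q i) * (w i) : ℕ) : ℤ) := by
      exact_mod_cast h
    have h2 : (d : ℤ) ∣ (d' : ℤ) * Y + (p : ℤ) * Z := by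
      have h3 : (d' : ℤ) * Y + (p : ℤ) * Z
          = ((∑ i, ((b i * q' i + c i * g i) % q i) * (w i) : ℕ) : ℤ) + (d : ℤ) * K := by
        rw [hXsum]; ring
      rw [h3]
      exact dvd_add hZd (dvd_mul_right _ _)
    have hpY : (p : ℤ) ∣ Y := by
      have h4 : (p : ℤ) ∣ (d' : ℤ) * Y + (p : ℤ) * Z := dvd_trans ⟨d', hdZ⟩ h2
      have h5 : (p : ℤ) ∣ (d' : ℤ) * Y := (dvd_add_right (dvd_mul_right _ _)).mp
        (by rwa [add_comm] at h4)
      exact hcopZ.dvd_of_dvd_mul_left h5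
    have hd'Z : (d' : ℤ) ∣ Z := by
      have h4 : (d' : ℤ) ∣ (d' : ℤ) * Y + (p : ℤ) * Z := dvd_trans ⟨p, by rw [hdZ]; ring⟩ h2
      have h5 : (d' : ℤ) ∣ (p : ℤ) * Z := (dvd_add_right (dvd_mul_right _ _)).mp h4
      exact hcopZ.symm.dvd_of_dvd_mul_left h5
    constructor
    · have : (p : ℤ) ∣ ((∑ i, b i : ℕ) : ℤ) := by
        rw [hYdef] at hpY
        push_cast
        exact hpY
      exact_mod_cast this
    · have : (d' : ℤ) ∣ ((∑ i, c i * w' i : ℕ) : ℤ) := by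
        rw [hZdef] at hd'Z
        push_cast
        exact hd'Z
      exact_mod_cast this
  · rintro ⟨h1, h2⟩
    have hpY : (p : ℤ) ∣ Y := by
      rw [hYdef]
      have : (p : ℤ) ∣ ((∑ i, b i : ℕ) : ℤ) := by exact_mod_cast h1
      push_cast at this
      exact this
    have hd'Z : (d' : ℤ) ∣ Z := by
      rw [hZdef]
      have : (d' : ℤ) ∣ ((∑ i, c i * w' i : ℕ) : ℤ) := by exact_mod_cast h2
      push_cast at this
      exact this
    have h3 : (d : ℤ) ∣ (d' : ℤ) * Y + (p : ℤ) * Z := by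
      rw [hdZ]
      refine dvd_add ?_ ?_
      · obtain ⟨y, hy⟩ := hpY
        exact ⟨y, by rw [hy]; ring⟩
      · obtain ⟨z, hz⟩ := hd'Z
        exact ⟨z, by rw [hz]; ring⟩
    have h4 : (d : ℤ) ∣ ((∑ i, ((b i * q' i + c i * g i) % q i) * (w i) : ℕ) : ℤ) := by
      rw [hXsum]
      exact dvd_sub h3 (dvd_mul_right _ _)
    exact_mod_cast h4
end cond

section W2
variable {ι : Type} [Fintype ι] [DecidableEq ι]


lemma W_lemma (p : ℕ) (hp : 0 < p) (g : ι → ℕ) (x : ι → ℕ → ℝ) (hx : ∀ i b, 0 ≤ x i b)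
    (i₁ i₂ : ι) (h12 : i₁ ≠ i₂) (hg1 : g i₁ = p) (hg2 : g i₂ = p) :
    ∑ b ∈ (Fintype.piFinset fun i => Finset.range (g i)).filter (fun b => p ∣ ∑ i, b i),
      ∏ i, x i (b i)
    ≤ (1 / p) * ∏ i, Real.sqrt ((g i) * ∑ t ∈ Finset.range (g i), x i t ^ 2) := by
  classical
  set B := (Fintype.piFinset fun i => Finset.range (g i)).filter (fun b => p ∣ ∑ i, b i) with hB
  set E := (univ.erase i₁).erase i₂ with hE
  set S : ι → ℝ := fun i => ∑ t ∈ Finset.range (g i), x i t ^ 2 with hSdef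
  set L : ι → ℝ := fun i => ∑ t ∈ Finset.range (g i), x i t with hLdef
  set R : (ι → ℕ) → ℝ := fun b => ∏ i ∈ E, x i (b i) with hRdef
  have hi₂mem : i₂ ∈ univ.erase i₁ := mem_erase.2 ⟨Ne.symm h12, mem_univ _⟩
  have hS : ∀ i, 0 ≤ S i := fun i => Finset.sum_nonneg fun t _ => pow_two_nonneg _
  have hL : ∀ i, 0 ≤ L i := fun i => Finset.sum_nonneg fun t _ => hx i t
  have hR : ∀ b, 0 ≤ R b := fun b => Finset.prod_nonneg fun i _ => hx i (b i)
  have prodsplit : ∀ w : ι → ℝ, ∏ i, w i = w i₁ * (w i₂ * ∏ i ∈ E, w i) := by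
    intro w
    rw [← Finset.mul_prod_erase univ w (mem_univ i₁), ← Finset.mul_prod_erase _ w hi₂mem]
  -- Cauchy-Schwarz setup
  set F : (ι → ℕ) → ℝ := fun b => x i₁ (b i₁) * Real.sqrt (R b) with hFdef
  set G : (ι → ℕ) → ℝ := fun b => x i₂ (b i₂) * Real.sqrt (R b) with hGdef
  have hW : (∑ b ∈ B, ∏ i, x i (b i)) = ∑ b ∈ B, F b * G b := by
    refine Finset.sum_congr rfl fun b _ => ?_
    rw [prodsplit (fun i => x i (b i))]
    rw [hFdef, hGdef]
    dsimp only
    rw [show x i₁ (b i₁) * Real.sqrt (R b) * (x i₂ (b i₂) * Real.sqrt (R b))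
        = x i₁ (b i₁) * (x i₂ (b i₂) * (Real.sqrt (R b) * Real.sqrt (R b))) from by ring,
      Real.mul_self_sqrt (hR b)]
  have hCS := Finset.sum_mul_sq_le_sq_mul_sq B F G
  -- evaluate ∑ F^2
  set z1 : ι → ℕ → ℝ := fun i t => if i = i₁ then x i t ^ 2 else if i = i₂ then 1 else x i t with hz1def
  have hF2 : ∑ b ∈ B, F b ^ 2 = S i₁ * ∏ i ∈ E, L i := by
    have h1 : ∀ b ∈ B, F b ^ 2 = ∏ i, z1 i (b i) := by
      intro b _
      rw [prodsplit (fun i => z1 i (b i))]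
      have e1 : z1 i₁ (b i₁) = x i₁ (b i₁) ^ 2 := by simp [hz1def]
      have e2 : z1 i₂ (b i₂) = 1 := by simp [hz1def, Ne.symm h12]
      have e3 : ∏ i ∈ E, z1 i (b i) = R b := by
        refine Finset.prod_congr rfl fun i hi => ?_
        have hne1 : i ≠ i₁ := Finset.ne_of_mem_erase (Finset.mem_of_mem_erase (by rwa [hE] at hi))
        have hne2 : i ≠ i₂ := Finset.ne_of_mem_erase (by rwa [hE] at hi)
        simp [hz1def, hne1, hne2]
      rw [e1, e2, e3, hFdef]
      dsimp only
      rw [mul_pow, Real.sq_sqrt (hR b)]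
      ring
    rw [Finset.sum_congr rfl h1, kill_coord p hp g i₂ hg2 z1 (fun t => by simp [hz1def, Ne.symm h12])]
    rw [prodsplit (fun i => ∑ t ∈ Finset.range (if i = i₂ then 1 else g i), z1 i t)]
    have e1 : ∑ t ∈ Finset.range (if i₁ = i₂ then 1 else g i₁), z1 i₁ t = S i₁ := by
      rw [if_neg h12]
      exact Finset.sum_congr rfl fun t _ => by simp [hz1def]
    have e2 : ∑ t ∈ Finset.range (if i₂ = i₂ then 1 else g i₂), z1 i₂ t = 1 := by
      rw [if_pos rfl]
      simp [hz1def, Ne.symm h12]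
    have e3 : ∏ i ∈ E, (∑ t ∈ Finset.range (if i = i₂ then 1 else g i), z1 i t) = ∏ i ∈ E, L i := by
      refine Finset.prod_congr rfl fun i hi => ?_
      have hne1 : i ≠ i₁ := Finset.ne_of_mem_erase (Finset.mem_of_mem_erase (by rwa [hE] at hi))
      have hne2 : i ≠ i₂ := Finset.ne_of_mem_erase (by rwa [hE] at hi)
      rw [if_neg hne2]
      exact Finset.sum_congr rfl fun t _ => by simp [hz1def, hne1, hne2]
    rw [e1, e2, e3, one_mul]
  -- evaluate ∑ G^2
  set z2 : ι → ℕ → ℝ := fun i t => if i = i₂ then x i t ^ 2 else if i = i₁ then 1 else x i t with hz2def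
  have hG2 : ∑ b ∈ B, G b ^ 2 = S i₂ * ∏ i ∈ E, L i := by
    have h1 : ∀ b ∈ B, G b ^ 2 = ∏ i, z2 i (b i) := by
      intro b _
      rw [prodsplit (fun i => z2 i (b i))]
      have e1 : z2 i₁ (b i₁) = 1 := by simp [hz2def, h12]
      have e2 : z2 i₂ (b i₂) = x i₂ (b i₂) ^ 2 := by simp [hz2def]
      have e3 : ∏ i ∈ E, z2 i (b i) = R b := by
        refine Finset.prod_congr rfl fun i hi => ?_
        have hne1 : i ≠ i₁ := Finset.ne_of_mem_erase (Finset.mem_of_mem_erase (by rwa [hE] at hi))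
        have hne2 : i ≠ i₂ := Finset.ne_of_mem_erase (by rwa [hE] at hi)
        simp [hz2def, hne1, hne2]
      rw [e1, e2, e3, hGdef]
      dsimp only
      rw [mul_pow, Real.sq_sqrt (hR b)]
      ring
    rw [Finset.sum_congr rfl h1, kill_coord p hp g i₁ hg1 z2 (fun t => by simp [hz2def, h12])]
    rw [prodsplit (fun i => ∑ t ∈ Finset.range (if i = i₁ then 1 else g i), z2 i t)]
    have e1 : ∑ t ∈ Finset.range (if i₁ = i₁ then 1 else g i₁), z2 i₁ t = 1 := by
      rw [if_pos rfl]
      simp [hz2def, h12]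
    have e2 : ∑ t ∈ Finset.range (if i₂ = i₁ then 1 else g i₂), z2 i₂ t = S i₂ := by
      rw [if_neg (Ne.symm h12)]
      exact Finset.sum_congr rfl fun t _ => by simp [hz2def]
    have e3 : ∏ i ∈ E, (∑ t ∈ Finset.range (if i = i₁ then 1 else g i), z2 i t) = ∏ i ∈ E, L i := by
      refine Finset.prod_congr rfl fun i hi => ?_
      have hne1 : i ≠ i₁ := Finset.ne_of_mem_erase (Finset.mem_of_mem_erase (by rwa [hE] at hi))
      have hne2 : i ≠ i₂ := Finset.ne_of_mem_erase (by rwa [hE] at hi)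
      rw [if_neg hne1]
      exact Finset.sum_congr rfl fun t _ => by simp [hz2def, hne1, hne2]
    rw [e1, e2, e3, one_mul]
  -- combine
  set P : ℝ := ∏ i ∈ E, L i with hPdef
  have hP : 0 ≤ P := Finset.prod_nonneg fun i _ => hL i
  have hWnn : 0 ≤ ∑ b ∈ B, ∏ i, x i (b i) :=
    Finset.sum_nonneg fun b _ => Finset.prod_nonneg fun i _ => hx i (b i)
  have hWsq : (∑ b ∈ B, ∏ i, x i (b i)) ^ 2 ≤ (Real.sqrt (S i₁) * Real.sqrt (S i₂) * P) ^ 2 := by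
    rw [hW]
    calc (∑ b ∈ B, F b * G b) ^ 2 ≤ (∑ b ∈ B, F b ^ 2) * (∑ b ∈ B, G b ^ 2) := hCS
    _ = (S i₁ * P) * (S i₂ * P) := by rw [hF2, hG2]
    _ = (Real.sqrt (S i₁) * Real.sqrt (S i₂) * P) ^ 2 := by
        rw [mul_pow, mul_pow, Real.sq_sqrt (hS i₁), Real.sq_sqrt (hS i₂)]
        ring
  have hWle : (∑ b ∈ B, ∏ i, x i (b i)) ≤ Real.sqrt (S i₁) * Real.sqrt (S i₂) * P := by
    have h0 : 0 ≤ Real.sqrt (S i₁) * Real.sqrt (S i₂) * P :=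
      mul_nonneg (mul_nonneg (Real.sqrt_nonneg _) (Real.sqrt_nonneg _)) hP
    nlinarith [hWsq, hWnn, h0]
  -- bound P
  have hLb : ∀ i, L i ≤ Real.sqrt ((g i) * S i) := by
    intro i
    have h1 : L i ^ 2 ≤ (g i) * S i := by
      have h2 := Finset.sum_mul_sq_le_sq_mul_sq (Finset.range (g i)) (fun _ => (1:ℝ)) (x i)
      simp only [one_mul, one_pow, Finset.sum_const, Finset.card_range, nsmul_eq_mul, mul_one] at h2
      exact h2
    calc L i = Real.sqrt (L i ^ 2) := (Real.sqrt_sq (hL i)).symm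
    _ ≤ Real.sqrt ((g i) * S i) := Real.sqrt_le_sqrt h1
  have hPle : P ≤ ∏ i ∈ E, Real.sqrt ((g i) * S i) :=
    Finset.prod_le_prod (fun i _ => hL i) (fun i _ => hLb i)
  -- final
  have hfinal : (1 / (p:ℝ)) * ∏ i, Real.sqrt ((g i) * S i)
      = Real.sqrt (S i₁) * Real.sqrt (S i₂) * ∏ i ∈ E, Real.sqrt ((g i) * S i) := by
    rw [prodsplit (fun i => Real.sqrt ((g i) * S i))]
    rw [hg1, hg2, Real.sqrt_mul (by positivity : (0:ℝ) ≤ (p:ℕ)) (S i₁),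
      Real.sqrt_mul (by positivity : (0:ℝ) ≤ (p:ℕ)) (S i₂)]
    have hps : Real.sqrt p * Real.sqrt p = (p:ℝ) := Real.mul_self_sqrt (by positivity)
    have hpne : (p:ℝ) ≠ 0 := by positivity
    set Q : ℝ := ∏ i ∈ E, Real.sqrt ((g i) * S i) with hQdef
    set a := Real.sqrt (S i₁)
    set bb := Real.sqrt (S i₂)
    set c := Real.sqrt (p:ℝ)
    rw [show (1/(p:ℝ)) * (c * a * (c * bb * Q)) = (c * c) * ((1/(p:ℝ)) * (a * (bb * Q))) from by ring,
      hps]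
    rw [show (p:ℝ) * ((1/(p:ℝ)) * (a * (bb * Q))) = ((p:ℝ) * (1/(p:ℝ))) * (a * (bb * Q)) from by ring,
      mul_one_div_cancel hpne, one_mul]
    ring
  rw [hfinal]
  calc (∑ b ∈ B, ∏ i, x i (b i)) ≤ Real.sqrt (S i₁) * Real.sqrt (S i₂) * P := hWle
  _ ≤ Real.sqrt (S i₁) * Real.sqrt (S i₂) * ∏ i ∈ E, Real.sqrt ((g i) * S i) := by
      apply mul_le_mul_of_nonneg_left hPle
      exact mul_nonneg (Real.sqrt_nonneg _) (Real.sqrt_nonneg _)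

end W2

lemma lcm_div_p {ι : Type} [Fintype ι] [DecidableEq ι] (q : ι → ℕ) (d p : ℕ)
    (hq0 : ∀ i, q i ≠ 0) (hlcm : Finset.univ.lcm q = d) (hp : p.Prime) (hpd : p ∣ d)
    (hsfd : Squarefree d) :
    Finset.univ.lcm (fun i => q i / Nat.gcd p (q i)) = d / p := by
  have hqd : ∀ i, q i ∣ d := fun i => hlcm ▸ Finset.dvd_lcm (mem_univ i)
  apply Nat.dvd_antisymm
  · exact Finset.lcm_dvd fun i _ => arith_q'_dvd hp hsfd (hqd i) hpd
  · have hdl : d ∣ p * Finset.univ.lcm (fun i => q i / Nat.gcd p (q i)) := by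
      rw [← hlcm]
      apply Finset.lcm_dvd
      intro i _
      have h1 : q i = Nat.gcd p (q i) * (q i / Nat.gcd p (q i)) :=
        (Nat.mul_div_cancel' (Nat.gcd_dvd_right p (q i))).symm
      rw [h1]
      exact mul_dvd_mul (Nat.gcd_dvd_left p (q i)) (Finset.dvd_lcm (mem_univ i))
    obtain ⟨k, hk⟩ := hdl
    have hd : d = p * (d / p) := (Nat.mul_div_cancel' hpd).symm
    refine ⟨k, ?_⟩
    apply Nat.eq_of_mul_eq_mul_left hp.pos
    rw [hk, ← mul_assoc, ← hd]

lemma key : ∀ (d : ℕ) (ι : Type) [Fintype ι] [DecidableEq ι] (q : ι → ℕ) (H : ι → ℕ → ℂ),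
    (∀ i, Squarefree (q i)) →
    (∀ pp : ℕ, pp.Prime → pp ∣ d → 2 ≤ (Finset.univ.filter (fun i => pp ∣ q i)).card) →
    Finset.univ.lcm q = d →
    ‖∑ a ∈ (Fintype.piFinset fun i => Finset.range (q i)).filter
        (fun a => d ∣ ∑ i, a i * (d / q i)), ∏ i, H i (a i)‖ ≤
      (1 / (d : ℝ)) * ∏ i, Real.sqrt ((q i) * ∑ t ∈ Finset.range (q i), ‖H i t‖ ^ 2) := by
  intro d
  induction d using Nat.strong_induction_on with
  | _ d IH =>
  intro ι instF instD q H hsf hcov hlcm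
  rcases eq_or_ne d 1 with rfl | hd1
  · -- base case d = 1
    have hq1 : ∀ i, q i = 1 := fun i => Nat.dvd_one.mp (hlcm ▸ Finset.dvd_lcm (mem_univ i))
    have hpi : (Fintype.piFinset fun i => Finset.range (q i)) = {fun _ => 0} := by
      ext a
      simp [Fintype.mem_piFinset, hq1, Nat.lt_one_iff, funext_iff]
    rw [hpi, Finset.filter_true_of_mem (fun x _ => one_dvd _), Finset.sum_singleton, norm_prod]
    apply le_of_eq
    simp only [hq1]
    simp [Finset.sum_range_one, Real.sqrt_sq, norm_nonneg]
  · -- inductive step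
    have hq0 : ∀ i, q i ≠ 0 := fun i => (hsf i).ne_zero
    have hqpos : ∀ i, 0 < q i := fun i => Nat.pos_of_ne_zero (hq0 i)
    have hd0 : d ≠ 0 := hlcm ▸ finset_lcm_ne_zero' _ _ (fun i _ => hq0 i)
    have hsfd : Squarefree d := hlcm ▸ squarefree_finset_lcm _ _ (fun i _ => hsf i)
    set p : ℕ := d.minFac with hpdef
    have hp : p.Prime := Nat.minFac_prime hd1
    have hpd : p ∣ d := Nat.minFac_dvd d
    have hqd : ∀ i, q i ∣ d := fun i => hlcm ▸ Finset.dvd_lcm (mem_univ i)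
    set g : ι → ℕ := fun i => Nat.gcd p (q i) with hgdef
    set q' : ι → ℕ := fun i => q i / g i with hq'def
    set d' : ℕ := d / p with hd'def
    have hgq : ∀ i, g i * q' i = q i := fun i => Nat.mul_div_cancel' (Nat.gcd_dvd_right p (q i))
    have hcop : ∀ i, Nat.Coprime (g i) (q' i) := fun i => arith_cop_g hp hsfd (hqd i) hpd
    have hq'0 : ∀ i, q' i ≠ 0 := by
      intro i h
      apply hq0 i
      rw [← hgq i, h, Nat.mul_zero]
    have hd'lt : d' < d := Nat.div_lt_self (Nat.pos_of_ne_zero hd0) hp.one_lt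
    have hd'0 : d' ≠ 0 := by
      intro h
      have := Nat.mul_div_cancel' hpd
      rw [← hd'def, h, Nat.mul_zero] at this
      exact hd0 this.symm
    have hlcm' : Finset.univ.lcm q' = d' := lcm_div_p q d p hq0 hlcm hp hpd hsfd
    -- two indices with p | q i
    have hcard : 1 < (Finset.univ.filter (fun i => p ∣ q i)).card := by
      have := hcov p hp hpd
      omega
    obtain ⟨i₁, hi₁, i₂, hi₂, h12⟩ := Finset.one_lt_card.1 hcard
    have hg1 : g i₁ = p := Nat.gcd_eq_left (Finset.mem_filter.1 hi₁).2
    have hg2 : g i₂ = p := Nat.gcd_eq_left (Finset.mem_filter.1 hi₂).2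
    -- the bijection
    set E : ι → ℕ → ℕ → ℕ := fun i b c => (b * q' i + c * g i) % q i with hEdef
    set B1 : Finset (ι → ℕ) :=
      (Fintype.piFinset fun i => Finset.range (g i)).filter (fun b => p ∣ ∑ i, b i) with hB1def
    set B2 : Finset (ι → ℕ) :=
      (Fintype.piFinset fun i => Finset.range (q' i)).filter
        (fun c => d' ∣ ∑ i, c i * (d' / q' i)) with hB2def
    have step1 : ∑ a ∈ (Fintype.piFinset fun i => Finset.range (q i)).filter
          (fun a => d ∣ ∑ i, a i * (d / q i)), ∏ i, H i (a i)
        = ∑ bc ∈ B1 ×ˢ B2, ∏ i, H i (E i (bc.1 i) (bc.2 i)) := by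
      symm
      refine Finset.sum_bij (i := fun bc _ => fun i => E i (bc.1 i) (bc.2 i)) ?_ ?_ ?_ ?_
      · rintro ⟨b, c⟩ hbc
        obtain ⟨hb', hc'⟩ := Finset.mem_product.1 hbc
        rw [hB1def, Finset.mem_filter, Fintype.mem_piFinset] at hb'
        rw [hB2def, Finset.mem_filter, Fintype.mem_piFinset] at hc'
        rw [Finset.mem_filter, Fintype.mem_piFinset]
        constructor
        · intro i
          exact Finset.mem_range.2 (Nat.mod_lt _ (hqpos i))
        · exact (cond_split q d p hsfd hp hpd hqd hq0 b c
            (fun i => Finset.mem_range.1 (hb'.1 i))).2 ⟨hb'.2, hc'.2⟩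
      · rintro ⟨b, c⟩ hbc ⟨b', c'⟩ hbc' heq
        obtain ⟨hb1, hc1⟩ := Finset.mem_product.1 hbc
        obtain ⟨hb1', hc1'⟩ := Finset.mem_product.1 hbc'
        rw [hB1def, Finset.mem_filter, Fintype.mem_piFinset] at hb1 hb1'
        rw [hB2def, Finset.mem_filter, Fintype.mem_piFinset] at hc1 hc1'
        have hco : ∀ i, b i = b' i ∧ c i = c' i := by
          intro i
          exact coord_inj (hgq i) (hcop i)
            (Finset.mem_range.1 (hb1.1 i)) (Finset.mem_range.1 (hc1.1 i))
            (Finset.mem_range.1 (hb1'.1 i)) (Finset.mem_range.1 (hc1'.1 i))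
            (congrFun heq i)
        exact Prod.ext (funext fun i => (hco i).1) (funext fun i => (hco i).2)
      · intro a ha
        rw [Finset.mem_filter, Fintype.mem_piFinset] at ha
        have hex : ∀ i, ∃ bb, bb < g i ∧ ∃ cc, cc < q' i ∧ E i bb cc = a i := fun i =>
          coord_surj (hqpos i) (hgq i) (hcop i) (Finset.mem_range.1 (ha.1 i))
        choose bb hbb cc hcc hEq using hex
        have hsum : (∑ i, a i * (d / q i)) = ∑ i, (E i (bb i) (cc i)) * (d / q i) :=
          Finset.sum_congr rfl fun i _ => by rw [hEq i]
        have hcond := ha.2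
        rw [hsum] at hcond
        have hsplit := (cond_split q d p hsfd hp hpd hqd hq0 bb cc hbb).1 hcond
        refine ⟨(bb, cc), ?_, funext fun i => hEq i⟩
        rw [Finset.mem_product]
        constructor
        · rw [hB1def, Finset.mem_filter, Fintype.mem_piFinset]
          exact ⟨fun i => Finset.mem_range.2 (hbb i), hsplit.1⟩
        · rw [hB2def, Finset.mem_filter, Fintype.mem_piFinset]
          exact ⟨fun i => Finset.mem_range.2 (hcc i), hsplit.2⟩
      · intro bc _
        rfl
    rw [step1, Finset.sum_product]
    -- bound the inner sums via IH
    set B' : ι → ℕ → ℝ := fun i t => ∑ cc ∈ Finset.range (q' i), ‖H i (E i t cc)‖ ^ 2 with hB'def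
    have hB'nn : ∀ i t, 0 ≤ B' i t := fun i t =>
      Finset.sum_nonneg fun cc _ => pow_two_nonneg _
    have hinner : ∀ b ∈ B1, ‖∑ c ∈ B2, ∏ i, H i (E i (b i) (c i))‖
        ≤ (1 / (d' : ℝ)) * ∏ i, Real.sqrt ((q' i) * B' i (b i)) := by
      intro b _
      have hsf' : ∀ i, Squarefree (q' i) := fun i =>
        (hsf i).squarefree_of_dvd (Nat.div_dvd_of_dvd (Nat.gcd_dvd_right p (q i)))
      have hcov' : ∀ pp : ℕ, pp.Prime → pp ∣ d' →
          2 ≤ (Finset.univ.filter (fun i => pp ∣ q' i)).card := by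
        intro pp hpp hppd'
        have hppd : pp ∣ d := hppd'.trans (Nat.div_dvd_of_dvd hpd)
        refine le_trans (hcov pp hpp hppd) (Finset.card_le_card ?_)
        intro i hi
        rw [Finset.mem_filter] at hi ⊢
        refine ⟨hi.1, ?_⟩
        have hppne : pp ≠ p := by
          rintro rfl
          exact (arith_pd' hp hsfd hpd) hppd'
        have h1 : pp ∣ g i * q' i := (hgq i) ▸ hi.2
        rcases (Nat.Prime.dvd_mul hpp).1 h1 with h2 | h2
        · exact absurd ((Nat.prime_dvd_prime_iff_eq hpp hp).1
            (h2.trans (Nat.gcd_dvd_left p (q i)))) hppne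
        · exact h2
      exact IH d' hd'lt ι q' (fun i t => H i (E i (b i) t)) hsf' hcov' hlcm'
    set Btot : ι → ℝ := fun i => ∑ t ∈ Finset.range (q i), ‖H i t‖ ^ 2 with hBtotdef
    have hsplitprod : ∀ b : ι → ℕ, ∏ i, Real.sqrt ((q' i) * B' i (b i))
        = (∏ i, Real.sqrt (q' i)) * ∏ i, Real.sqrt (B' i (b i)) := by
      intro b
      rw [← Finset.prod_mul_distrib]
      exact Finset.prod_congr rfl fun i _ => Real.sqrt_mul (Nat.cast_nonneg _) _
    have hnn1 : (0:ℝ) ≤ (1/(d':ℝ)) * ∏ i, Real.sqrt (q' i) :=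
      mul_nonneg (by positivity) (Finset.prod_nonneg fun i _ => Real.sqrt_nonneg _)
    have hd'ne : (d':ℝ) ≠ 0 := by exact_mod_cast hd'0
    have hpne : (p:ℝ) ≠ 0 := by exact_mod_cast hp.ne_zero
    have h2 : (d:ℝ) = (p:ℝ) * (d':ℝ) := by exact_mod_cast (Nat.mul_div_cancel' hpd).symm
    have hfinal : (1/(d':ℝ)) * (∏ i, Real.sqrt (q' i))
        * ((1/(p:ℝ)) * ∏ i, Real.sqrt ((g i) * Btot i))
        = (1/(d:ℝ)) * ∏ i, Real.sqrt ((q i) * Btot i) := by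
      have h1 : (∏ i, Real.sqrt (q' i)) * (∏ i, Real.sqrt ((g i) * Btot i))
          = ∏ i, Real.sqrt ((q i) * Btot i) := by
        rw [← Finset.prod_mul_distrib]
        refine Finset.prod_congr rfl fun i _ => ?_
        rw [← Real.sqrt_mul (Nat.cast_nonneg _)]
        congr 1
        have hc : (g i : ℝ) * (q' i : ℝ) = (q i : ℝ) := by exact_mod_cast hgq i
        linear_combination (Btot i) * hc
      rw [← h1, h2]
      rw [show (1:ℝ)/((p:ℝ)*(d':ℝ)) = (1/(d':ℝ))*(1/(p:ℝ)) from by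
        rw [one_div, one_div, one_div, mul_inv]; ring]
      ring
    calc ‖∑ b ∈ B1, ∑ c ∈ B2, ∏ i, H i (E i (b i) (c i))‖
        ≤ ∑ b ∈ B1, ‖∑ c ∈ B2, ∏ i, H i (E i (b i) (c i))‖ := norm_sum_le _ _
      _ ≤ ∑ b ∈ B1, (1 / (d' : ℝ)) * ∏ i, Real.sqrt ((q' i) * B' i (b i)) :=
          Finset.sum_le_sum hinner
      _ = ∑ b ∈ B1, ((1/(d':ℝ)) * ∏ i, Real.sqrt (q' i)) * ∏ i, Real.sqrt (B' i (b i)) := by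
          refine Finset.sum_congr rfl fun b _ => ?_
          rw [hsplitprod b]
          ring
      _ = ((1/(d':ℝ)) * ∏ i, Real.sqrt (q' i)) * ∑ b ∈ B1, ∏ i, Real.sqrt (B' i (b i)) := by
          rw [Finset.mul_sum]
      _ ≤ ((1/(d':ℝ)) * ∏ i, Real.sqrt (q' i))
          * ((1/(p:ℝ)) * ∏ i, Real.sqrt ((g i) * ∑ t ∈ Finset.range (g i),
              (Real.sqrt (B' i t)) ^ 2)) := by
          refine mul_le_mul_of_nonneg_left ?_ hnn1
          exact W_lemma p hp.pos g (fun i t => Real.sqrt (B' i t))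
            (fun i t => Real.sqrt_nonneg _) i₁ i₂ h12 hg1 hg2
      _ = (1/(d':ℝ)) * (∏ i, Real.sqrt (q' i))
          * ((1/(p:ℝ)) * ∏ i, Real.sqrt ((g i) * Btot i)) := by
          have hSB : ∀ i, (∑ t ∈ Finset.range (g i), (Real.sqrt (B' i t)) ^ 2) = Btot i := by
            intro i
            rw [Finset.sum_congr rfl (fun t _ => Real.sq_sqrt (hB'nn i t))]
            exact coord_sum (hqpos i) (hgq i) (hcop i) (fun a => ‖H i a‖^2)
          rw [Finset.prod_congr rfl (fun i _ => by rw [hSB i] :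
            ∀ i ∈ Finset.univ, Real.sqrt ((g i) * ∑ t ∈ Finset.range (g i),
              (Real.sqrt (B' i t)) ^ 2) = Real.sqrt ((g i) * Btot i))]
      _ = (1/(d:ℝ)) * ∏ i, Real.sqrt ((q i) * Btot i) := hfinal

lemma den_one_iff_dvd_nat {ι : Type} [Fintype ι] [DecidableEq ι] (q : ι → ℕ)
    (hq : ∀ i, q i ≠ 0) (a : ι → ℕ) :
    (∑ i, (a i : ℚ) / (q i : ℚ)).den = 1 ↔
      (Finset.univ.lcm q) ∣ ∑ i, a i * (Finset.univ.lcm q / q i) := by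
  have hcast : ((∑ i, a i * (Finset.univ.lcm q / q i) : ℕ) : ℤ)
      = ∑ i, (a i : ℤ) * ((Finset.univ.lcm q / q i : ℕ) : ℤ) := by
    push_cast; ring
  rw [den_one_iff_dvd q hq a, ← hcast, Int.natCast_dvd_natCast]

lemma main2 : ∀ (d : ℕ) (ι : Type) [Fintype ι] [DecidableEq ι] (q : ι → ℕ) (G : ℝ → ℂ)
    (M : ι → ℝ),
    (∀ i, Squarefree (q i)) →
    (∀ i r, r ∣ q i → 0 < r →
      (∑ a ∈ Finset.Ioo 0 r, ‖G ((a : ℝ) / (r : ℝ))‖ ^ 2) ≤ (r : ℝ) * M i) →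
    Finset.univ.lcm q = d →
    ‖∑ a ∈ (Fintype.piFinset fun i => Finset.Ioo 0 (q i)).filter
        (fun a => (∑ i, (a i : ℚ) / (q i : ℚ)).den = 1),
      ∏ i, G ((a i : ℝ) / (q i : ℝ))‖ ≤
      (1 / (d : ℝ)) * ∏ i, (q i : ℝ) * Real.sqrt (M i) := by
  intro d
  induction d using Nat.strong_induction_on with
  | _ d IH =>
  intro ι instF instD q G M hsf hM hlcm
  have hq0 : ∀ i, q i ≠ 0 := fun i => (hsf i).ne_zero
  have hqpos : ∀ i, 0 < q i := fun i => Nat.pos_of_ne_zero (hq0 i)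
  have hd0 : d ≠ 0 := hlcm ▸ finset_lcm_ne_zero' _ _ (fun i _ => hq0 i)
  have hM0 : ∀ i, 0 ≤ M i := by
    intro i
    have h1 := hM i (q i) dvd_rfl (hqpos i)
    have h2 : (0:ℝ) ≤ ∑ a ∈ Finset.Ioo 0 (q i), ‖G ((a : ℝ) / (q i : ℝ))‖ ^ 2 := by positivity
    have h3 : (0:ℝ) < (q i : ℝ) := by exact_mod_cast hqpos i
    nlinarith
  by_cases hA : ∀ pp : ℕ, pp.Prime → pp ∣ d → 2 ≤ (Finset.univ.filter (fun i => pp ∣ q i)).card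
  · -- Case A : apply key with the zero-extended function
    set H : ι → ℕ → ℂ := fun i a => if a = 0 then 0 else G ((a : ℝ) / (q i : ℝ)) with hHdef
    have hsum_eq : ∑ a ∈ (Fintype.piFinset fun i => Finset.Ioo 0 (q i)).filter
          (fun a => (∑ i, (a i : ℚ) / (q i : ℚ)).den = 1), ∏ i, G ((a i : ℝ) / (q i : ℝ))
        = ∑ a ∈ (Fintype.piFinset fun i => Finset.range (q i)).filter
          (fun a => d ∣ ∑ i, a i * (d / q i)), ∏ i, H i (a i) := by
      have hfc : (Fintype.piFinset fun i => Finset.range (q i)).filter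
            (fun a => d ∣ ∑ i, a i * (d / q i))
          = (Fintype.piFinset fun i => Finset.range (q i)).filter
            (fun a => (∑ i, (a i : ℚ) / (q i : ℚ)).den = 1) := by
        refine Finset.filter_congr fun a _ => ?_
        rw [den_one_iff_dvd_nat q hq0 a, hlcm]
      rw [hfc]
      have hsub : (Fintype.piFinset fun i => Finset.Ioo 0 (q i)).filter
            (fun a => (∑ i, (a i : ℚ) / (q i : ℚ)).den = 1)
          ⊆ (Fintype.piFinset fun i => Finset.range (q i)).filter
            (fun a => (∑ i, (a i : ℚ) / (q i : ℚ)).den = 1) := by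
        apply Finset.filter_subset_filter
        apply Fintype.piFinset_subset
        intro i x hx
        rw [Finset.mem_Ioo] at hx
        exact Finset.mem_range.2 hx.2
      rw [← Finset.sum_subset hsub]
      · refine Finset.sum_congr rfl fun a ha => ?_
        refine Finset.prod_congr rfl fun i _ => ?_
        rw [Finset.mem_filter, Fintype.mem_piFinset] at ha
        have := ha.1 i
        rw [Finset.mem_Ioo] at this
        rw [hHdef]
        simp only
        rw [if_neg (by omega : a i ≠ 0)]
      · intro a ha hna
        rw [Finset.mem_filter, Fintype.mem_piFinset] at ha hna
        push_neg at hna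
        have : ∃ i, a i = 0 := by
          by_contra hcon
          push_neg at hcon
          refine absurd (hna (fun i => ?_) ) (by simpa using ha.2)
          rw [Finset.mem_Ioo]
          exact ⟨Nat.pos_of_ne_zero (hcon i), Finset.mem_range.1 (ha.1 i)⟩
        obtain ⟨i, hi⟩ := this
        refine Finset.prod_eq_zero (Finset.mem_univ i) ?_
        rw [hHdef]
        simp only
        rw [if_pos hi]
    rw [hsum_eq]
    have hBH : ∀ i, (∑ t ∈ Finset.range (q i), ‖H i t‖ ^ 2)
        = ∑ a ∈ Finset.Ioo 0 (q i), ‖G ((a : ℝ) / (q i : ℝ))‖ ^ 2 := by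
      intro i
      have hr : Finset.range (q i) = insert 0 (Finset.Ioo 0 (q i)) := by
        rw [Finset.range_eq_Ico, ← Finset.Ioo_insert_left (hqpos i)]
      rw [hr, Finset.sum_insert (by simp)]
      have h0 : ‖H i 0‖ ^ 2 = 0 := by rw [hHdef]; simp
      rw [h0, zero_add]
      refine Finset.sum_congr rfl fun a ha => ?_
      rw [Finset.mem_Ioo] at ha
      rw [hHdef]
      simp only
      rw [if_neg (by omega : a ≠ 0)]
    calc ‖∑ a ∈ (Fintype.piFinset fun i => Finset.range (q i)).filter
          (fun a => d ∣ ∑ i, a i * (d / q i)), ∏ i, H i (a i)‖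
        ≤ (1 / (d : ℝ)) * ∏ i, Real.sqrt ((q i) * ∑ t ∈ Finset.range (q i), ‖H i t‖ ^ 2) :=
          key d ι q H hsf hA hlcm
      _ ≤ (1 / (d : ℝ)) * ∏ i, (q i : ℝ) * Real.sqrt (M i) := by
          refine mul_le_mul_of_nonneg_left ?_ (by positivity)
          refine Finset.prod_le_prod (fun i _ => Real.sqrt_nonneg _) (fun i _ => ?_)
          have h1 : (∑ t ∈ Finset.range (q i), ‖H i t‖ ^ 2) ≤ (q i : ℝ) * M i := by
            rw [hBH i]
            exact hM i (q i) dvd_rfl (hqpos i)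
          calc Real.sqrt ((q i) * ∑ t ∈ Finset.range (q i), ‖H i t‖ ^ 2)
              ≤ Real.sqrt ((q i) * ((q i : ℝ) * M i)) :=
                Real.sqrt_le_sqrt (mul_le_mul_of_nonneg_left h1 (by positivity))
            _ = (q i : ℝ) * Real.sqrt (M i) := by
                rw [← mul_assoc, Real.sqrt_mul (by positivity), Real.sqrt_mul_self (by positivity)]
  · -- Case B : some prime divides only one q i
    push_neg at hA
    obtain ⟨pp, hpp, hppd, hcard⟩ := hA
    have hne : (Finset.univ.filter (fun i => pp ∣ q i)).Nonempty := by
      obtain ⟨i, _, hi⟩ := prime_dvd_finset_lcm hpp Finset.univ q (hlcm ▸ hppd)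
      exact ⟨i, Finset.mem_filter.2 ⟨Finset.mem_univ i, hi⟩⟩
    have hcard1 : (Finset.univ.filter (fun i => pp ∣ q i)).card = 1 := by
      have := Finset.card_pos.2 hne
      omega
    obtain ⟨i₀, hfilt⟩ := Finset.card_eq_one.1 hcard1
    have hppq : pp ∣ q i₀ := by
      have : i₀ ∈ Finset.univ.filter (fun i => pp ∣ q i) := hfilt ▸ Finset.mem_singleton_self i₀
      exact (Finset.mem_filter.1 this).2
    have huniq : ∀ j, pp ∣ q j → j = i₀ := by
      intro j hj
      have : j ∈ Finset.univ.filter (fun i => pp ∣ q i) :=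
        Finset.mem_filter.2 ⟨Finset.mem_univ j, hj⟩
      rw [hfilt] at this
      exact Finset.mem_singleton.1 this
    have hpp0 : (pp:ℕ) ≠ 0 := hpp.ne_zero
    have hq2pos : 0 < q i₀ / pp := Nat.div_pos (Nat.le_of_dvd (hqpos i₀) hppq) hpp.pos
    set q2 : ι → ℕ := Function.update q i₀ (q i₀ / pp) with hq2def
    have hq2i₀ : q2 i₀ = q i₀ / pp := Function.update_self i₀ _ q
    have hq2j : ∀ j, j ≠ i₀ → q2 j = q j := fun j hj => Function.update_of_ne hj _ q
    have hq2dvd : ∀ i, q2 i ∣ q i := by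
      intro i
      rcases eq_or_ne i i₀ with rfl | hi
      · rw [hq2i₀]; exact Nat.div_dvd_of_dvd hppq
      · rw [hq2j i hi]
    have hsf2 : ∀ i, Squarefree (q2 i) := fun i => (hsf i).squarefree_of_dvd (hq2dvd i)
    have hq20 : ∀ i, q2 i ≠ 0 := fun i => (hsf2 i).ne_zero
    have hqmul : q i₀ = pp * (q i₀ / pp) := (Nat.mul_div_cancel' hppq).symm
    have hdp0 : d / pp ≠ 0 := by
      intro h
      have := Nat.mul_div_cancel' hppd
      rw [h, Nat.mul_zero] at this
      exact hd0 this.symm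
    have hlcm2 : Finset.univ.lcm q2 = d / pp := by
      apply Nat.dvd_antisymm
      · apply Finset.lcm_dvd
        intro i _
        rcases eq_or_ne i i₀ with rfl | hi
        · rw [hq2i₀]
          have h1 : q i ∣ d := hlcm ▸ Finset.dvd_lcm (Finset.mem_univ i)
          obtain ⟨k, hk⟩ := h1
          have h3 : d = pp * (q i / pp * k) := by
            rw [hk]
            nth_rewrite 1 [hqmul]
            ring
          have h2 : d / pp = q i / pp * k := by
            rw [h3, Nat.mul_div_cancel_left _ hpp.pos]
          exact ⟨k, h2⟩
        · rw [hq2j i hi]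
          have h1 : q i ∣ pp * (d / pp) := by
            rw [Nat.mul_div_cancel' hppd]
            exact hlcm ▸ Finset.dvd_lcm (Finset.mem_univ i)
          refine Nat.Coprime.dvd_of_dvd_mul_left ?_ h1
          exact Nat.coprime_comm.mp ((hpp.coprime_iff_not_dvd).2 (fun h => hi (huniq i h)))
      · have hdl : d ∣ pp * Finset.univ.lcm q2 := by
          rw [← hlcm]
          apply Finset.lcm_dvd
          intro i _
          rcases eq_or_ne i i₀ with rfl | hi
          · rw [hqmul, ← hq2i₀]
            exact mul_dvd_mul_left pp (Finset.dvd_lcm (Finset.mem_univ i))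
          · refine dvd_trans ?_ (dvd_mul_left _ pp)
            rw [← hq2j i hi]
            exact Finset.dvd_lcm (Finset.mem_univ i)
        obtain ⟨k, hk⟩ := hdl
        refine ⟨k, ?_⟩
        apply Nat.eq_of_mul_eq_mul_left hpp.pos
        rw [hk, ← mul_assoc, ← Nat.mul_div_cancel' hppd, Nat.mul_div_cancel_left _ hpp.pos]
    have hdplt : d / pp < d := Nat.div_lt_self (Nat.pos_of_ne_zero hd0) hpp.one_lt
    -- rational and real division identities
    have hqQ : (q i₀ : ℚ) ≠ 0 := by exact_mod_cast hq0 i₀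
    have hppQ : (pp : ℚ) ≠ 0 := by exact_mod_cast hpp0
    have hppR : (pp : ℝ) ≠ 0 := by exact_mod_cast hpp0
    have hQ : ∀ x : ℕ, ((pp * x : ℕ) : ℚ) / (q i₀ : ℚ) = (x : ℚ) / ((q i₀ / pp : ℕ) : ℚ) := by
      intro x
      have h1 : (q i₀ : ℚ) = (pp : ℚ) * ((q i₀ / pp : ℕ) : ℚ) := by exact_mod_cast hqmul
      rw [h1]
      push_cast
      rw [mul_div_mul_left _ _ hppQ]
    have hR : ∀ x : ℕ, ((pp * x : ℕ) : ℝ) / (q i₀ : ℝ) = (x : ℝ) / ((q i₀ / pp : ℕ) : ℝ) := by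
      intro x
      have h1 : (q i₀ : ℝ) = (pp : ℝ) * ((q i₀ / pp : ℕ) : ℝ) := by exact_mod_cast hqmul
      rw [h1]
      push_cast
      rw [mul_div_mul_left _ _ hppR]
    -- the rational sums agree under the update map
    have hratsum : ∀ a' : ι → ℕ,
        (∑ i, ((Function.update a' i₀ (pp * a' i₀)) i : ℚ) / (q i : ℚ))
          = ∑ i, (a' i : ℚ) / (q2 i : ℚ) := by
      intro a'
      refine Finset.sum_congr rfl fun i _ => ?_
      rcases eq_or_ne i i₀ with rfl | hi
      · rw [Function.update_self, hq2i₀]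
        exact_mod_cast hQ (a' i)
      · rw [Function.update_of_ne hi, hq2j i hi]
    -- sum equality via bijection
    have hsum : ∑ a ∈ (Fintype.piFinset fun i => Finset.Ioo 0 (q i)).filter
          (fun a => (∑ i, (a i : ℚ) / (q i : ℚ)).den = 1), ∏ i, G ((a i : ℝ) / (q i : ℝ))
        = ∑ a ∈ (Fintype.piFinset fun i => Finset.Ioo 0 (q2 i)).filter
          (fun a => (∑ i, (a i : ℚ) / (q2 i : ℚ)).den = 1), ∏ i, G ((a i : ℝ) / (q2 i : ℝ)) := by
      symm
      refine Finset.sum_bij (i := fun a' _ => Function.update a' i₀ (pp * a' i₀)) ?_ ?_ ?_ ?_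
      · intro a' ha'
        rw [Finset.mem_filter, Fintype.mem_piFinset] at ha' ⊢
        constructor
        · intro i
          rcases eq_or_ne i i₀ with rfl | hi
          · rw [Function.update_self, Finset.mem_Ioo]
            have h4 := ha'.1 i
            rw [hq2i₀, Finset.mem_Ioo] at h4
            constructor
            · exact Nat.mul_pos hpp.pos h4.1
            · have h7 := (mul_lt_mul_iff_right₀ (show 0 < pp from hpp.pos)).mpr h4.2
              rwa [← hqmul] at h7
          · rw [Function.update_of_ne hi]
            have := ha'.1 i
            rwa [hq2j i hi] at this
        · rw [hratsum a']
          exact ha'.2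
      · intro a1 ha1 a2 ha2 heq
        funext i
        rcases eq_or_ne i i₀ with rfl | hi
        · have h1 := congrFun heq i
          rw [Function.update_self, Function.update_self] at h1
          exact Nat.eq_of_mul_eq_mul_left hpp.pos h1
        · have h1 := congrFun heq i
          rwa [Function.update_of_ne hi, Function.update_of_ne hi] at h1
      · intro a ha
        rw [Finset.mem_filter, Fintype.mem_piFinset] at ha
        have hdvd : pp ∣ a i₀ := by
          have h1 := den_one_forces_dvd q hq0 a i₀ ha.2
          have h2 : pp ∣ a i₀ * (Finset.univ.erase i₀).lcm q := dvd_trans hppq h1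
          rcases (Nat.Prime.dvd_mul hpp).1 h2 with h3 | h3
          · exact h3
          · exfalso
            obtain ⟨j, hj, hjd⟩ := prime_dvd_finset_lcm hpp _ q h3
            exact (Finset.ne_of_mem_erase hj) (huniq j hjd)
        refine ⟨Function.update a i₀ (a i₀ / pp), ?_, ?_⟩
        · rw [Finset.mem_filter, Fintype.mem_piFinset]
          constructor
          · intro i
            rcases eq_or_ne i i₀ with rfl | hi
            · rw [Function.update_self, hq2i₀, Finset.mem_Ioo]
              have := ha.1 i
              rw [Finset.mem_Ioo] at this
              constructor
              · exact Nat.div_pos (Nat.le_of_dvd this.1 hdvd) hpp.pos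
              · exact Nat.div_lt_div_of_lt_of_dvd hppq this.2
            · rw [Function.update_of_ne hi, hq2j i hi]
              exact ha.1 i
          · have h5 : Function.update (Function.update a i₀ (a i₀ / pp)) i₀
                (pp * (Function.update a i₀ (a i₀ / pp)) i₀) = a := by
              funext j
              rcases eq_or_ne j i₀ with rfl | hj
              · rw [Function.update_self, Function.update_self, Nat.mul_div_cancel' hdvd]
              · rw [Function.update_of_ne hj, Function.update_of_ne hj]
            have h6 := hratsum (Function.update a i₀ (a i₀ / pp))
            simp only [h5] at h6
            rw [← h6]
            exact ha.2
        · funext j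
          rcases eq_or_ne j i₀ with rfl | hj
          · rw [Function.update_self, Function.update_self, Nat.mul_div_cancel' hdvd]
          · rw [Function.update_of_ne hj, Function.update_of_ne hj]
      · intro a' ha'
        refine Finset.prod_congr rfl fun i _ => ?_
        rcases eq_or_ne i i₀ with rfl | hi
        · rw [Function.update_self, hq2i₀]
          congr 1
          exact_mod_cast (hR (a' i)).symm
        · rw [Function.update_of_ne hi, hq2j i hi]
    rw [hsum]
    have hM2 : ∀ i r, r ∣ q2 i → 0 < r →
        (∑ a ∈ Finset.Ioo 0 r, ‖G ((a : ℝ) / (r : ℝ))‖ ^ 2) ≤ (r : ℝ) * M i :=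
      fun i r hr hrp => hM i r (hr.trans (hq2dvd i)) hrp
    have hIH := IH (d / pp) hdplt ι q2 G M hsf2 hM2 hlcm2
    refine le_trans hIH (le_of_eq ?_)
    rw [← Finset.mul_prod_erase Finset.univ (fun i => (q2 i : ℝ) * Real.sqrt (M i))
        (Finset.mem_univ i₀),
      ← Finset.mul_prod_erase Finset.univ (fun i => (q i : ℝ) * Real.sqrt (M i))
        (Finset.mem_univ i₀)]
    have herase : ∏ j ∈ Finset.univ.erase i₀, (q2 j : ℝ) * Real.sqrt (M j)
        = ∏ j ∈ Finset.univ.erase i₀, (q j : ℝ) * Real.sqrt (M j) := by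
      refine Finset.prod_congr rfl fun j hj => ?_
      rw [hq2j j (Finset.ne_of_mem_erase hj)]
    rw [herase]
    have hdR : (d : ℝ) = (pp : ℝ) * ((d / pp : ℕ) : ℝ) := by
      exact_mod_cast (Nat.mul_div_cancel' hppd).symm
    have hqR : (q i₀ : ℝ) = (pp : ℝ) * ((q i₀ / pp : ℕ) : ℝ) := by exact_mod_cast hqmul
    have hdpR : ((d / pp : ℕ) : ℝ) ≠ 0 := by exact_mod_cast hdp0
    rw [hq2i₀, hdR, hqR]
    field_simp


/-- Variant basic inequality (Lemma 2). -/
theorem stmt_1 (k : ℕ) (q : Fin k → ℕ) (hsf : ∀ i, Squarefree (q i))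
    (hq : ∀ i, 1 < q i)
    (G : ℝ → ℂ) (G₀ : ℕ → ℝ)
    (hmono : ∀ m n : ℕ, 0 < m → m ≤ n → G₀ m ≤ G₀ n)
    (hbound : ∀ Q : ℕ, Squarefree Q → 1 < Q →
      ∑ a ∈ Finset.Ioo 0 Q, ‖G ((a : ℝ) / (Q : ℝ))‖ ^ 2 ≤ (Q : ℝ) * G₀ Q) :
    ‖∑ a ∈ (Fintype.piFinset fun i => Finset.Ioo 0 (q i)).filter
        (fun a => (∑ i, (a i : ℚ) / (q i : ℚ)).den = 1),
      ∏ i, G ((a i : ℝ) / (q i : ℝ))‖ ≤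
    (1 / ((Finset.univ.lcm q : ℕ) : ℝ)) *
      ∏ i, (q i : ℝ) * (G₀ (q i)) ^ ((1 : ℝ) / 2) := by
  have hqpos : ∀ i, 0 < q i := fun i => lt_trans Nat.zero_lt_one (hq i)
  have hG0 : ∀ i, 0 ≤ G₀ (q i) := by
    intro i
    have h1 := hbound (q i) (hsf i) (hq i)
    have h2 : (0:ℝ) ≤ ∑ a ∈ Finset.Ioo 0 (q i), ‖G ((a : ℝ) / (q i : ℝ))‖ ^ 2 := by positivity
    have h3 : (0:ℝ) < (q i : ℝ) := by exact_mod_cast hqpos i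
    nlinarith
  have hM : ∀ (i : Fin k) r, r ∣ q i → 0 < r →
      (∑ a ∈ Finset.Ioo 0 r, ‖G ((a : ℝ) / (r : ℝ))‖ ^ 2) ≤ (r : ℝ) * G₀ (q i) := by
    intro i r hdvd hrpos
    rcases eq_or_lt_of_le (Nat.one_le_iff_ne_zero.2 (Nat.pos_iff_ne_zero.1 hrpos)) with heq | hlt
    · rw [← heq]
      simp [Finset.Ioo_self]
      exact hG0 i
    · have h1 := hbound r ((hsf i).squarefree_of_dvd hdvd) hlt
      have h2 : G₀ r ≤ G₀ (q i) := hmono r (q i) hrpos (Nat.le_of_dvd (hqpos i) hdvd)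
      have h3 : (0:ℝ) ≤ (r:ℝ) := by positivity
      nlinarith
  have hmain := main2 (Finset.univ.lcm q) (Fin k) q G (fun i => G₀ (q i)) hsf hM rfl
  have hrw : ∏ i, (q i : ℝ) * (G₀ (q i)) ^ ((1 : ℝ) / 2)
      = ∏ i, (q i : ℝ) * Real.sqrt (G₀ (q i)) := by
    refine Finset.prod_congr rfl fun i _ => ?_
    rw [Real.sqrt_eq_rpow]
  rw [hrw]
  exact hmain
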